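/- For every integer l ≥ 0, every integer n ≥ l + 1, and every real μ with 1 ≤ μ ≤ n − l, if X_{n,μ} is a binomial random variable with n trials and success probability μ/n, then P(X_{n,μ} ≥ μ + l) ≥ (⌊μ⌋/(⌊μ⌋+l+1))^{⌊μ⌋+l+1} ≥ 1/(2+l)^{2+l}. -/
import Mathlib


/-- The probability that a binomial random variable with `n` trials and success
probability `p` takes the value `k`. -/
noncomputable def binomialPMF (n : ℕ) (p : ℝ) (k : ℕ) : ℝ :=
  (n.choose k : ℝ) * p ^ k * (1 - p) ^ (n - k)

/-- `P(X ≥ t)` for `X` binomial with `n` trials and success probability `p`,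
where `t` is a real threshold. -/
noncomputable def binomialTail (n : ℕ) (p : ℝ) (t : ℝ) : ℝ :=
  ∑ k ∈ Finset.range (n + 1), if t ≤ (k : ℝ) then binomialPMF n p k else 0

/-- pmf of a Poisson-binomial: `W L k = P(sum of indep Bernoulli(L i) = k)`. -/
noncomputable def W : List ℝ → ℕ → ℝ
  | [], 0 => 1
  | [], _+1 => 0
  | x :: L, 0 => (1 - x) * W L 0
  | x :: L, (k+1) => x * W L k + (1 - x) * W L (k+1)

/-- tail of a Poisson-binomial: `T L k = P(sum ≥ k)`. -/
noncomputable def T : List ℝ → ℕ → ℝ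
  | _, 0 => 1
  | [], _+1 => 0
  | x :: L, (k+1) => x * T L k + (1 - x) * T L (k+1)

@[simp] lemma T_zero (L : List ℝ) : T L 0 = 1 := by cases L <;> rfl

lemma T_nil_succ (k : ℕ) : T [] (k+1) = 0 := rfl

lemma T_cons_succ (x : ℝ) (L : List ℝ) (k : ℕ) :
    T (x :: L) (k+1) = x * T L k + (1 - x) * T L (k+1) := rfl

lemma W_nil_succ (k : ℕ) : W [] (k+1) = 0 := rfl

lemma W_cons_zero (x : ℝ) (L : List ℝ) : W (x :: L) 0 = (1 - x) * W L 0 := rfl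

lemma W_cons_succ (x : ℝ) (L : List ℝ) (k : ℕ) :
    W (x :: L) (k+1) = x * W L k + (1 - x) * W L (k+1) := rfl

lemma W_nonneg (L : List ℝ) (hL : ∀ x ∈ L, 0 ≤ x ∧ x ≤ 1) (k : ℕ) : 0 ≤ W L k := by
  induction L generalizing k with
  | nil => cases k with
    | zero => norm_num [W]
    | succ k => simp [W_nil_succ]
  | cons x L ih =>
    have hx := hL x (by simp)
    have hL' : ∀ y ∈ L, 0 ≤ y ∧ y ≤ 1 := fun y hy => hL y (by simp [hy])
    cases k with
    | zero =>
      rw [W_cons_zero]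
      have := ih hL' 0
      nlinarith [hx.1, hx.2]
    | succ k =>
      rw [W_cons_succ]
      have h1 := ih hL' k
      have h2 := ih hL' (k+1)
      nlinarith [hx.1, hx.2]

lemma W_eq_zero (L : List ℝ) (k : ℕ) (h : L.length < k) : W L k = 0 := by
  induction L generalizing k with
  | nil =>
    cases k with
    | zero => simp at h
    | succ k => simp [W_nil_succ]
  | cons x L ih =>
    cases k with
    | zero => simp at h
    | succ k =>
      simp only [List.length_cons] at h
      rw [W_cons_succ, ih k (by omega), ih (k+1) (by omega)]
      ring

lemma T_eq_zero (L : List ℝ) (k : ℕ) (h : L.length < k) : T L k = 0 := by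
  induction L generalizing k with
  | nil =>
    cases k with
    | zero => simp at h
    | succ k => simp [T_nil_succ]
  | cons x L ih =>
    cases k with
    | zero => simp at h
    | succ k =>
      simp only [List.length_cons] at h
      rw [T_cons_succ, ih k (by omega), ih (k+1) (by omega)]
      ring

lemma W_eq_T_sub (L : List ℝ) (k : ℕ) : W L k = T L k - T L (k+1) := by
  induction L generalizing k with
  | nil =>
    cases k with
    | zero => simp [W, T_nil_succ]
    | succ k => simp [W_nil_succ, T_nil_succ]
  | cons x L ih =>
    cases k with
    | zero =>
      rw [W_cons_zero, T_cons_succ, ih 0]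
      simp only [T_zero]
      ring
    | succ k =>
      rw [W_cons_succ, T_cons_succ, T_cons_succ, ih k, ih (k+1)]
      ring

lemma T_le_one (L : List ℝ) (hL : ∀ x ∈ L, 0 ≤ x ∧ x ≤ 1) (k : ℕ) : T L k ≤ 1 := by
  induction L generalizing k with
  | nil => cases k with
    | zero => simp
    | succ k => simp [T_nil_succ]
  | cons x L ih =>
    have hx := hL x (by simp)
    have hL' : ∀ y ∈ L, 0 ≤ y ∧ y ≤ 1 := fun y hy => hL y (by simp [hy])
    cases k with
    | zero => simp
    | succ k =>
      rw [T_cons_succ]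
      have h1 := ih hL' k
      have h2 := ih hL' (k+1)
      nlinarith [hx.1, hx.2]

lemma T_nonneg (L : List ℝ) (hL : ∀ x ∈ L, 0 ≤ x ∧ x ≤ 1) (k : ℕ) : 0 ≤ T L k := by
  induction L generalizing k with
  | nil => cases k with
    | zero => simp
    | succ k => simp [T_nil_succ]
  | cons x L ih =>
    have hx := hL x (by simp)
    have hL' : ∀ y ∈ L, 0 ≤ y ∧ y ≤ 1 := fun y hy => hL y (by simp [hy])
    cases k with
    | zero => simp
    | succ k =>
      rw [T_cons_succ]
      have h1 := ih hL' k
      have h2 := ih hL' (k+1)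
      nlinarith [hx.1, hx.2]

lemma T_succ_le (L : List ℝ) (hL : ∀ x ∈ L, 0 ≤ x ∧ x ≤ 1) (k : ℕ) :
    T L (k+1) ≤ T L k := by
  induction L generalizing k with
  | nil => cases k with
    | zero => simp [T_nil_succ]
    | succ k => simp [T_nil_succ]
  | cons x L ih =>
    have hx := hL x (by simp)
    have hL' : ∀ y ∈ L, 0 ≤ y ∧ y ≤ 1 := fun y hy => hL y (by simp [hy])
    cases k with
    | zero =>
      rw [T_cons_succ]
      have h1 := T_le_one L hL' 0
      have h2 := T_le_one L hL' 1
      simp only [T_zero] at *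
      nlinarith [hx.1, hx.2]
    | succ k =>
      rw [T_cons_succ, T_cons_succ]
      have h1 := ih hL' k
      have h2 := ih hL' (k+1)
      nlinarith [hx.1, hx.2]

lemma T_antitone (L : List ℝ) (hL : ∀ x ∈ L, 0 ≤ x ∧ x ≤ 1) {j k : ℕ} (h : j ≤ k) :
    T L k ≤ T L j := by
  induction k with
  | zero => simp_all
  | succ k ih =>
    rcases Nat.lt_or_ge j (k+1) with h' | h'
    · exact le_trans (T_succ_le L hL k) (ih (by omega))
    · have : j = k + 1 := by omega
      simp [this]

lemma T_eq_sum (L : List ℝ) (j : ℕ) :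
    T L j = ∑ k ∈ Finset.range (L.length + 1), if j ≤ k then W L k else 0 := by
  induction L generalizing j with
  | nil =>
    cases j with
    | zero => simp [W]
    | succ j => simp [T_nil_succ, Nat.succ_le_iff]
  | cons x L ih =>
    have key : ∀ m : ℕ, T (x :: L) m =
        ∑ k ∈ Finset.range (L.length + 2), if m ≤ k then W (x :: L) k else 0 := by
      intro m
      cases m with
      | zero =>
        -- total mass: prove ∑ W (x::L) = 1 using ihs at 0
        simp only [T_zero, Nat.zero_le, if_true]
        rw [Finset.sum_range_succ']
        simp only [W_cons_succ, W_cons_zero, Finset.sum_add_distrib, ← Finset.mul_sum]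
        have h0 : ∑ k ∈ Finset.range (L.length + 1), W L k = 1 := by
          have := ih 0
          simp only [T_zero, Nat.zero_le, if_true] at this
          linarith
        have h1 : ∑ k ∈ Finset.range (L.length + 1), W L (k+1) = 1 - W L 0 := by
          have h2 : ∑ k ∈ Finset.range (L.length + 2), W L k = 1 := by
            rw [Finset.sum_range_succ, W_eq_zero L (L.length + 1) (by omega), h0]; ring
          rw [Finset.sum_range_succ'] at h2
          linarith
        rw [h0, h1]; ring
      | succ m =>
        rw [T_cons_succ, ih m, ih (m+1)]
        rw [Finset.sum_range_succ' (fun k => if m+1 ≤ k then W (x :: L) k else 0)]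
        have hzero : (if m+1 ≤ 0 then W (x :: L) 0 else 0) = 0 := by norm_num
        rw [hzero, add_zero]
        have : ∀ k ∈ Finset.range (L.length + 1),
            (if m+1 ≤ k+1 then W (x :: L) (k+1) else 0)
            = x * (if m ≤ k then W L k else 0) + (1-x) * (if m ≤ k then W L (k+1) else 0) := by
          intro k _
          rw [W_cons_succ]
          by_cases h : m ≤ k <;> simp [h, Nat.succ_le_succ_iff]
        rw [Finset.sum_congr rfl this, Finset.sum_add_distrib, ← Finset.mul_sum, ← Finset.mul_sum]
        congr 1
        rw [mul_eq_mul_left_iff]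
        left
        -- ∑_{k<N+1} [m ≤ k] W L (k+1) = ∑_{k<N+1} [m+1 ≤ k] W L k
        rw [Finset.sum_range_succ' (fun k => if m+1 ≤ k then W L k else 0)]
        simp only [Nat.succ_le_succ_iff, Nat.not_succ_le_zero, if_false, add_zero]
        rw [Finset.sum_range_succ (fun k => if m ≤ k then W L (k+1) else 0)]
        rw [W_eq_zero L (L.length + 1) (by omega)]
        simp
    exact key j

lemma W_replicate (n : ℕ) (p : ℝ) (k : ℕ) :
    W (List.replicate n p) k = binomialPMF n p k := by
  induction n generalizing k with
  | zero =>
    cases k with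
    | zero => simp [W, binomialPMF]
    | succ k => simp [List.replicate, W_nil_succ, binomialPMF]
  | succ n ih =>
    rw [List.replicate_succ]
    cases k with
    | zero =>
      rw [W_cons_zero, ih 0]
      simp [binomialPMF, pow_succ]
      ring
    | succ k =>
      rw [W_cons_succ, ih k, ih (k+1)]
      unfold binomialPMF
      rcases Nat.lt_or_ge k n with h | h
      · have hc : (n+1).choose (k+1) = n.choose k + n.choose (k+1) := Nat.choose_succ_succ n k
        have hsub : n - k = (n - (k+1)) + 1 := by omega
        have hsub2 : n + 1 - (k+1) = n - k := by omega
        rw [hc, hsub2, hsub]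
        push_cast
        ring
      · rcases Nat.eq_or_lt_of_le h with h' | h'
        · subst h'
          simp [Nat.choose_self, Nat.choose_succ_self]
          ring
        · rw [Nat.choose_eq_zero_of_lt (by omega : n < k+1),
              Nat.choose_eq_zero_of_lt (by omega : n < k),
              Nat.choose_eq_zero_of_lt (by omega : n+1 < k+1)]
          simp

lemma binomialTail_eq_T (n : ℕ) (p : ℝ) (t : ℝ) :
    binomialTail n p t = T (List.replicate n p) ⌈t⌉₊ := by
  rw [T_eq_sum]
  simp only [List.length_replicate, W_replicate]
  unfold binomialTail
  apply Finset.sum_congr rfl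
  intro k _
  congr 1
  simp [Nat.ceil_le]

lemma T_swap (x y : ℝ) (L : List ℝ) (k : ℕ) : T (x :: y :: L) k = T (y :: x :: L) k := by
  cases k with
  | zero => simp
  | succ k =>
    cases k with
    | zero =>
      simp only [T_cons_succ, T_zero]
      ring
    | succ k =>
      simp only [T_cons_succ]
      ring

lemma T_perm {L M : List ℝ} (h : L.Perm M) (k : ℕ) : T L k = T M k := by
  induction h generalizing k with
  | nil => rfl
  | cons x h ih =>
    cases k with
    | zero => simp
    | succ k => rw [T_cons_succ, T_cons_succ, ih k, ih (k+1)]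
  | swap x y L => exact T_swap y x L k
  | trans h1 h2 ih1 ih2 => rw [ih1 k, ih2 k]

lemma T_head_mono {x y : ℝ} (L : List ℝ) (hL : ∀ z ∈ L, 0 ≤ z ∧ z ≤ 1)
    (hxy : x ≤ y) (k : ℕ) : T (x :: L) k ≤ T (y :: L) k := by
  cases k with
  | zero => simp
  | succ k =>
    rw [T_cons_succ, T_cons_succ]
    have h := T_succ_le L hL k
    nlinarith

lemma T_cons_le_cons {y : ℝ} {L L' : List ℝ} (hy : 0 ≤ y) (hy1 : y ≤ 1)
    (h : ∀ j, T L j ≤ T L' j) (k : ℕ) : T (y :: L) k ≤ T (y :: L') k := by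
  cases k with
  | zero => simp
  | succ k =>
    rw [T_cons_succ, T_cons_succ]
    have h1 := h k
    have h2 := h (k+1)
    nlinarith

lemma T_replicate_mono {x y : ℝ} (hx : 0 ≤ x) (hxy : x ≤ y) (hy1 : y ≤ 1) (n : ℕ) (k : ℕ) :
    T (List.replicate n x) k ≤ T (List.replicate n y) k := by
  induction n generalizing k with
  | zero => cases k <;> simp
  | succ n ih =>
    rw [List.replicate_succ, List.replicate_succ]
    calc T (x :: List.replicate n x) k ≤ T (y :: List.replicate n x) k := by
          apply T_head_mono _ _ hxy
          intro z hz
          rw [List.eq_of_mem_replicate hz]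
          exact ⟨hx, le_trans hxy hy1⟩
      _ ≤ T (y :: List.replicate n y) k :=
          T_cons_le_cons (le_trans hx hxy) hy1 ih k

lemma T_replicate_self (n : ℕ) (p : ℝ) : T (List.replicate n p) n = p ^ n := by
  induction n with
  | zero => simp
  | succ n ih =>
    rw [List.replicate_succ, T_cons_succ, ih,
        T_eq_zero _ _ (by simp), pow_succ]
    ring

/-- Key decreasing lemma for the pmf of a Poisson binomial with small success probs. -/
lemma W_key (c : ℝ) (hc0 : 0 ≤ c) (hc1 : c < 1) (L : List ℝ)
    (hL : ∀ x ∈ L, 0 ≤ x ∧ x ≤ c) (j : ℕ) :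
    ((j : ℝ) + 1) * W L (j+1) ≤ c / (1 - c) * ((L.length : ℝ) - j) * W L j := by
  induction L generalizing j with
  | nil =>
    cases j with
    | zero => simp [W, W_nil_succ]
    | succ j => simp [W_nil_succ]
  | cons x L ih =>
    have hx := hL x (by simp)
    have hL' : ∀ y ∈ L, 0 ≤ y ∧ y ≤ c := fun y hy => hL y (by simp [hy])
    have hL1 : ∀ y ∈ L, 0 ≤ y ∧ y ≤ 1 := fun y hy =>
      ⟨(hL' y hy).1, le_trans (hL' y hy).2 (le_of_lt hc1)⟩
    have hc' : 0 < 1 - c := by linarith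
    have hr : 0 ≤ c / (1 - c) := div_nonneg hc0 (le_of_lt hc')
    -- x ≤ (c/(1-c)) * (1-x)
    have hxr : x ≤ c / (1 - c) * (1 - x) := by
      rw [div_mul_eq_mul_div, le_div_iff₀ hc']
      nlinarith [hx.1, hx.2]
    have hlen : ((x :: L).length : ℝ) = (L.length : ℝ) + 1 := by simp
    cases j with
    | zero =>
      have ih0 := ih hL' 0
      simp only [Nat.cast_zero, zero_add, one_mul, sub_zero] at ih0 ⊢
      rw [W_cons_succ, W_cons_zero, hlen]
      have hW0 := W_nonneg L hL1 0
      have hW1 := W_nonneg L hL1 1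
      nlinarith [hx.1, hx.2]
    | succ i =>
      have ih1 := ih hL' i
      have ih2 := ih hL' (i+1)
      rw [W_cons_succ, W_cons_succ, hlen]
      have hWi := W_nonneg L hL1 i
      have hWi1 := W_nonneg L hL1 (i+1)
      have hWi2 := W_nonneg L hL1 (i+2)
      push_cast at ih1 ih2 ⊢
      nlinarith [hx.1, hx.2, mul_nonneg hr hWi1]

/-- two-coordinate smoothing: with the sum fixed, increasing the product increases the
tail beyond `d+2`, provided the pmf of the rest is decreasing at `d`. -/
lemma T_smooth (x y x' y' : ℝ) (C : List ℝ) (d : ℕ) (hs : x + y = x' + y')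
    (hp : x * y ≤ x' * y') (hW : W C (d+1) ≤ W C d) :
    T (x :: y :: C) (d+2) ≤ T (x' :: y' :: C) (d+2) := by
  have e1 := W_eq_T_sub C d
  have e2 := W_eq_T_sub C (d+1)
  have key : 0 ≤ (x'*y' - x*y) * ((T C d - T C (d+1)) - (T C (d+1) - T C (d+2))) := by
    apply mul_nonneg (by linarith)
    rw [← e1, ← e2]; linarith
  have hsB : (x+y) * (T C (d+1) - T C (d+2)) = (x'+y') * (T C (d+1) - T C (d+2)) := by
    rw [hs]
  have hd : d + 1 + 1 = d + 2 := rfl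
  simp only [T_cons_succ, hd]
  nlinarith [key, hsB]

/-- the pmf of a Poisson binomial with `n-1` entries all `≤ m/n` is decreasing
from `m+l-1` to `m+l` (where `j+1 = m+l`). -/
lemma W_dec (m l n j : ℕ) (hm : 1 ≤ m) (hj : j + 1 = m + l) (hn : m + l + 1 ≤ n)
    (C : List ℝ) (hlen : C.length + 1 = n) (hC : ∀ x ∈ C, 0 ≤ x ∧ x ≤ (m:ℝ)/n) :
    W C (j+1) ≤ W C j := by
  have hn0 : (0:ℝ) < n := by
    have : 0 < n := by omega
    exact_mod_cast this
  have hmn : m < n := by omega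
  have hc1 : (m:ℝ)/n < 1 := by
    rw [div_lt_one hn0]
    exact_mod_cast hmn
  have hc0 : 0 ≤ (m:ℝ)/n := by positivity
  have hL1 : ∀ x ∈ C, 0 ≤ x ∧ x ≤ 1 := fun x hx =>
    ⟨(hC x hx).1, le_trans (hC x hx).2 (le_of_lt hc1)⟩
  have hkey := W_key ((m:ℝ)/n) hc0 hc1 C hC j
  have hnm : (0:ℝ) < (n:ℝ) - m := by
    have : (m:ℝ) < n := by exact_mod_cast hmn
    linarith
  have hcc : (m:ℝ)/n / (1 - (m:ℝ)/n) = (m:ℝ)/((n:ℝ)-m) := by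
    have h1 : 1 - (m:ℝ)/n = ((n:ℝ)-m)/n := by field_simp
    rw [h1]
    rw [div_div_div_eq]
    rw [mul_comm ((m:ℝ)) (n:ℝ), mul_div_mul_left _ _ (ne_of_gt hn0)]
  rw [hcc] at hkey
  have hlenR : (C.length : ℝ) = (n:ℝ) - 1 := by
    have h := congrArg (Nat.cast : ℕ → ℝ) hlen
    push_cast at h
    linarith
  rw [hlenR] at hkey
  have hmj : (m:ℝ) ≤ (j:ℝ) + 1 := by exact_mod_cast (by omega : m ≤ j + 1)
  have hcoef : (m:ℝ)/((n:ℝ)-m) * (((n:ℝ)-1) - j) ≤ (j:ℝ) + 1 := by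
    rw [div_mul_eq_mul_div, div_le_iff₀ hnm]
    nlinarith [mul_le_mul_of_nonneg_right hmj (le_of_lt hn0)]
  have hWj := W_nonneg C hL1 j
  have h3 : (m:ℝ)/((n:ℝ)-m) * (((n:ℝ)-1) - j) * W C j ≤ ((j:ℝ)+1) * W C j :=
    mul_le_mul_of_nonneg_right hcoef hWj
  have h4 : ((j:ℝ)+1) * W C (j+1) ≤ ((j:ℝ)+1) * W C j := le_trans hkey h3
  exact le_of_mul_le_mul_left h4 (by positivity)

lemma T_step (m l n : ℕ) (hm : 1 ≤ m) (hn : m + l + 1 ≤ n) :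
    T (List.replicate n ((m:ℝ)/n)) (m+l+1) ≤ T (List.replicate (n+1) ((m:ℝ)/(n+1))) (m+l+1) := by
  obtain ⟨d, hd⟩ : ∃ d, m + l + 1 = d + 2 := ⟨m + l - 1, by omega⟩
  set p : ℝ := (m:ℝ)/n with hp
  set p' : ℝ := (m:ℝ)/((n:ℝ)+1) with hp'
  set δ : ℝ := p - p' with hδ
  have hn0 : (0:ℝ) < n := by exact_mod_cast (show 0 < n by omega)
  have hn1 : (0:ℝ) < (n:ℝ)+1 := by linarith
  have hmn : (m:ℝ) < n := by exact_mod_cast (show m < n by omega)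
  have hm0 : (0:ℝ) < m := by exact_mod_cast hm
  have hp'p : p' < p := by
    rw [hp, hp', div_lt_div_iff₀ hn1 hn0]
    nlinarith
  have hδ0 : 0 < δ := by rw [hδ]; linarith
  have hδn : (n:ℝ)*δ = p' := by
    rw [hδ, hp, hp']
    field_simp
    ring
  have hp'0 : 0 < p' := by positivity
  have hCb : ∀ (i k : ℕ), ∀ z ∈ List.replicate i p' ++ List.replicate k p,
      0 ≤ z ∧ z ≤ (m:ℝ)/n := by
    intro i k z hz
    rcases List.mem_append.1 hz with h | h
    · rw [List.eq_of_mem_replicate h, ← hp]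
      exact ⟨le_of_lt hp'0, le_of_lt hp'p⟩
    · rw [List.eq_of_mem_replicate h, ← hp]
      exact ⟨by positivity, le_refl p⟩
  set a := m + l + 1 with haa
  let M : ℕ → ℝ := fun i => T (List.replicate i p' ++ List.replicate (n-i) p ++ [(i:ℝ) * δ]) a
  have hM0 : M 0 = T (List.replicate n p) a := by
    show T (List.replicate 0 p' ++ List.replicate (n-0) p ++ [(0:ℕ)*δ]) a = _
    simp only [List.replicate_zero, List.nil_append, Nat.sub_zero, Nat.cast_zero, zero_mul]
    rw [T_perm (List.perm_append_singleton 0 (List.replicate n p)) a, hd, T_cons_succ]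
    norm_num
  have hMn : M n = T (List.replicate (n+1) p') a := by
    show T (List.replicate n p' ++ List.replicate (n-n) p ++ [(n:ℕ)*δ]) a = _
    rw [Nat.sub_self, List.replicate_zero, List.append_nil, hδn, ← List.replicate_succ']
  have hstep : ∀ i, i < n → M i ≤ M (i+1) := by
    intro i hi
    obtain ⟨k, hk⟩ : ∃ k, n - i = k + 1 := ⟨n - i - 1, by omega⟩
    have hk' : n - (i+1) = k := by omega
    set A : List ℝ := List.replicate i p' with hA
    set R : List ℝ := List.replicate k p with hR
    set c : ℝ := (i:ℕ) * δ with hc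
    set c' : ℝ := ((i+1:ℕ):ℝ) * δ with hc'
    have hperm1 : (A ++ List.replicate (n-i) p ++ [c]).Perm (p :: c :: (A ++ R)) := by
      rw [hk, List.replicate_succ]
      have s1 : ((A ++ (p :: R)) ++ [c]).Perm (c :: (A ++ (p :: R))) :=
        List.perm_append_singleton c _
      have s2 : (A ++ (p :: R)).Perm (p :: (A ++ R)) := List.perm_middle
      exact (s1.trans (List.Perm.cons c s2)).trans (List.Perm.swap p c _)
    have hperm2 : (List.replicate (i+1) p' ++ List.replicate (n-(i+1)) p ++ [c']).Perm
        (p' :: c' :: (A ++ R)) := by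
      rw [hk', List.replicate_succ]
      have s1 : ((p' :: (A ++ R)) ++ [c']).Perm (c' :: p' :: (A ++ R)) :=
        List.perm_append_singleton c' _
      exact s1.trans (List.Perm.swap p' c' _)
    have e1 : M i = T (p :: c :: (A ++ R)) a := T_perm hperm1 a
    have e2 : M (i+1) = T (p' :: c' :: (A ++ R)) a := T_perm hperm2 a
    rw [e1, e2, hd]
    apply T_smooth
    · push_cast [hc, hc']
      rw [hδ]
      ring
    · have hiδ : (i:ℝ)*δ ≤ p' := by
        have hi' : (i:ℝ) ≤ (n:ℝ) - 1 := by
          have : (i:ℝ) + 1 ≤ n := by exact_mod_cast hi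
          linarith
        nlinarith
      push_cast [hc, hc']
      nlinarith [mul_nonneg (le_of_lt hδ0) (sub_nonneg.2 hiδ)]
    · apply W_dec m l n d hm (by omega) hn _ ?_ ?_
      · simp [hA, hR]
        omega
      · exact hCb i k
  have hchain : ∀ i, i ≤ n → M 0 ≤ M i := by
    intro i
    induction i with
    | zero => intro _; exact le_refl _
    | succ i ih => intro h; exact le_trans (ih (by omega)) (hstep i (by omega))
  calc T (List.replicate n p) a = M 0 := hM0.symm
    _ ≤ M n := hchain n le_rfl
    _ = T (List.replicate (n+1) p') a := hMn
    _ = _ := by rw [hp']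

lemma T_main (m l : ℕ) (hm : 1 ≤ m) (n : ℕ) (hn : m + l + 1 ≤ n) :
    ((m:ℝ)/((m:ℝ)+l+1))^(m+l+1) ≤ T (List.replicate n ((m:ℝ)/n)) (m+l+1) := by
  induction n, hn using Nat.le_induction with
  | base =>
    rw [T_replicate_self]
    apply le_of_eq
    congr 1
    push_cast
    ring
  | succ n hn ih =>
    have h := T_step m l n hm hn
    push_cast at h ⊢
    exact le_trans ih h

lemma part2 (l : ℕ) : ∀ m : ℕ, 1 ≤ m →
    (1:ℝ)/((2:ℝ)+l)^(2+l) ≤ ((m:ℝ)/((m:ℝ)+l+1))^(m+l+1) := by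
  intro m hm
  induction m, hm using Nat.le_induction with
  | base =>
    apply le_of_eq
    have h1 : ((1:ℕ):ℝ) = (1:ℝ) := by norm_num
    rw [h1, show (1:ℝ)+l+1 = (2:ℝ)+l from by ring, show 1+l+1 = 2+l from by omega,
        div_pow, one_pow]
  | succ m hm ih =>
    set Mr : ℝ := (m:ℝ) with hMr
    have hM1 : (1:ℝ) ≤ Mr := by rw [hMr]; exact_mod_cast hm
    set c : ℝ := (l:ℝ)+1 with hc
    have hc1 : (1:ℝ) ≤ c := by
      rw [hc]
      have : (0:ℝ) ≤ l := Nat.cast_nonneg l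
      linarith
    set e : ℕ := m + l + 1 with he
    have heR : (e:ℝ) = Mr + c := by rw [he]; push_cast; ring
    set A : ℝ := Mr/(Mr+c) with hA
    set B : ℝ := (Mr+1)/(Mr+1+c) with hB
    set x : ℝ := c/(Mr*(Mr+1+c)) with hx
    have hd1 : (0:ℝ) < Mr + c := by linarith
    have hd2 : (0:ℝ) < Mr + 1 + c := by linarith
    have hM0 : (0:ℝ) < Mr := by linarith
    have hA0 : 0 < A := by positivity
    have hB0 : 0 < B := by positivity
    have hx0 : 0 < x := by positivity
    have hBA : A * (1+x) = B := by
      rw [hA, hB, hx]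
      field_simp
      ring
    have hcx : 1 ≤ (1 + (Mr+c)*x) * B := by
      have hD : (0:ℝ) < Mr*(Mr+1+c) := by positivity
      have eq1 : 1 + (Mr+c)*x = (Mr*(Mr+1+c) + (Mr+c)*c) / (Mr*(Mr+1+c)) := by
        rw [hx]
        field_simp
      rw [eq1, hB, div_mul_div_comm, le_div_iff₀ (by positivity)]
      nlinarith [sq_nonneg c]
    have hBern : 1 + (Mr+c)*x ≤ (1+x)^e := by
      have := one_add_mul_le_pow (by linarith : (-2:ℝ) ≤ x) e
      rw [heR] at this
      linarith [this]
    have main : A^e ≤ B^(e+1) := by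
      calc A^e = A^e * 1 := (mul_one _).symm
        _ ≤ A^e * ((1 + (Mr+c)*x) * B) :=
            mul_le_mul_of_nonneg_left hcx (pow_nonneg (le_of_lt hA0) e)
        _ ≤ A^e * ((1+x)^e * B) := by
            apply mul_le_mul_of_nonneg_left _ (pow_nonneg (le_of_lt hA0) e)
            exact mul_le_mul_of_nonneg_right hBern (le_of_lt hB0)
        _ = (A * (1+x))^e * B := by rw [mul_pow, mul_assoc]
        _ = B^e * B := by rw [hBA]
        _ = B^(e+1) := (pow_succ B e).symm
    have h2 : m + 1 + l + 1 = e + 1 := by omega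
    calc (1:ℝ)/((2:ℝ)+l)^(2+l) ≤ (Mr/(Mr + (l:ℝ) + 1))^e := ih
      _ = A^e := by rw [hA, hc, add_assoc]
      _ ≤ B^(e+1) := main
      _ = ((↑(m+1):ℝ)/((↑(m+1):ℝ)+(l:ℝ)+1))^(m+1+l+1) := by
          rw [h2, hB, hc, hMr]
          push_cast
          ring_nf

/-- For integers `l ≥ 0`, `n ≥ l+1`, and real `1 ≤ μ ≤ n - l`, with
`X_{n,μ} ~ Binom(n, μ/n)`:
`P(X_{n,μ} ≥ μ+l) ≥ (⌊μ⌋/(⌊μ⌋+l+1))^{⌊μ⌋+l+1} ≥ 1/(2+l)^{2+l}`. -/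
theorem stmt1 (l n : ℕ) (hn : l + 1 ≤ n) (μ : ℝ) (hμ1 : 1 ≤ μ) (hμ2 : μ ≤ (n : ℝ) - l) :
    binomialTail n (μ / n) (μ + l)
      ≥ ((⌊μ⌋₊ : ℝ) / ((⌊μ⌋₊ : ℝ) + l + 1)) ^ (⌊μ⌋₊ + l + 1) ∧
    ((⌊μ⌋₊ : ℝ) / ((⌊μ⌋₊ : ℝ) + l + 1)) ^ (⌊μ⌋₊ + l + 1)
      ≥ 1 / ((2 : ℝ) + l) ^ (2 + l) := by
  have hμ0 : (0:ℝ) ≤ μ := by linarith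
  set m := ⌊μ⌋₊ with hm
  have hm1 : 1 ≤ m := by
    rw [hm]
    exact Nat.le_floor (by exact_mod_cast hμ1)
  have hmle : (m:ℝ) ≤ μ := Nat.floor_le hμ0
  have hlt : μ < (m:ℝ) + 1 := Nat.lt_floor_add_one μ
  have hn0 : (0:ℝ) < n := by
    have : 0 < n := by omega
    exact_mod_cast this
  have hmln : m + l ≤ n := by
    have h : (m:ℝ) + l ≤ n := by linarith
    exact_mod_cast h
  constructor
  · -- main inequality
    rw [ge_iff_le, binomialTail_eq_T]
    rcases Nat.lt_or_ge (m + l) n with hcase | hcase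
    · -- m + l + 1 ≤ n
      have h1 : ⌈μ + l⌉₊ ≤ m + l + 1 := Nat.ceil_le.2 (by push_cast; linarith)
      have hb : ∀ z ∈ List.replicate n (μ/n), 0 ≤ z ∧ z ≤ 1 := by
        intro z hz
        rw [List.eq_of_mem_replicate hz]
        constructor
        · positivity
        · rw [div_le_one hn0]
          have : (0:ℝ) ≤ l := Nat.cast_nonneg l
          linarith
      calc ((m:ℝ)/((m:ℝ)+l+1))^(m+l+1)
          ≤ T (List.replicate n ((m:ℝ)/n)) (m+l+1) := T_main m l hm1 n (by omega)
        _ ≤ T (List.replicate n (μ/n)) (m+l+1) := by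
            apply T_replicate_mono (by positivity) _ _
            · gcongr
            · rw [div_le_one hn0]
              have : (0:ℝ) ≤ l := Nat.cast_nonneg l
              linarith
        _ ≤ T (List.replicate n (μ/n)) ⌈μ + l⌉₊ := T_antitone _ hb h1
    · -- n = m + l, so μ = m
      have hnm : n = m + l := by omega
      have hnR : (n:ℝ) = (m:ℝ) + l := by rw [hnm]; push_cast; ring
      have hμm : μ = (m:ℝ) := by linarith
      have hceil : ⌈μ + l⌉₊ = n := by
        rw [hμm, show (m:ℝ) + (l:ℝ) = ((m+l:ℕ):ℝ) from by push_cast; ring, Nat.ceil_natCast, hnm]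
      rw [hceil, T_replicate_self, hμm]
      have hml0 : (0:ℝ) < (m:ℝ) + l := by
        have : (1:ℝ) ≤ (m:ℝ) := by exact_mod_cast hm1
        have : (0:ℝ) ≤ l := Nat.cast_nonneg l
        linarith [show (1:ℝ) ≤ (m:ℝ) from by exact_mod_cast hm1]
      have hq0 : (0:ℝ) ≤ (m:ℝ)/((m:ℝ)+l+1) := by positivity
      have hq1 : (m:ℝ)/((m:ℝ)+l+1) ≤ 1 := by
        rw [div_le_one (by linarith)]
        have : (0:ℝ) ≤ l := Nat.cast_nonneg l
        linarith
      calc ((m:ℝ)/((m:ℝ)+l+1))^(m+l+1)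
          ≤ ((m:ℝ)/((m:ℝ)+l+1))^(m+l) := pow_le_pow_of_le_one hq0 hq1 (by omega)
        _ ≤ ((m:ℝ)/((m:ℝ)+l))^(m+l) := by
            apply pow_le_pow_left₀ hq0
            exact div_le_div_of_nonneg_left (Nat.cast_nonneg m) hml0 (by linarith)
        _ = ((m:ℝ)/(n:ℝ))^n := by rw [hnR, hnm]
  · exact part2 l m hm1
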